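/- Let (ζ(t)) be an irreducible continuous-time Markov chain on a finite state space, let η be a state and B, C two disjoint sets of states not containing η. Then P_η[H_B < H_C] = α/(1+α), where α = P_η[H_B < H^+_{C ∪ {η}}] / P_η[H_C < H^+_{B ∪ {η}}], provided both probabilities are positive. -/

import Mathlib

open Finset

section ChainBasics

variable {E : Type*} [Fintype E] [DecidableEq E]

/-- The state occupied just before the `i`-th step of a finite path that starts at `η`
and then visits `w 0, w 1, …`. -/
def pstate (η : E) {n : ℕ} (w : Fin n → E) (i : Fin n) : E :=
  if (i : ℕ) = 0 then η else w ⟨(i : ℕ) - 1, lt_of_le_of_lt (Nat.sub_le _ _) i.isLt⟩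

/-- The probability (product of one-step transition probabilities of the jump chain `q`)
of the finite path starting at `η` and successively visiting `w 0, …, w (n-1)`. -/
noncomputable def pathP (q : E → E → ℝ) (η : E) {n : ℕ} (w : Fin n → E) : ℝ :=
  ∏ i : Fin n, q (pstate η w i) (w i)

open Classical in
/-- For a chain with one-step transition probabilities `q` started at `η`, the probability
that the first visit (at a step `≥ 1`) to the set `A` occurs at a state of `B`.
For `B ⊆ A`, this is the probability of the event `{H⁺_A = H_B}`. -/
noncomputable def firstHitIn (q : E → E → ℝ) (η : E) (B A : Finset E) : ℝ :=
  ∑' n : ℕ, ∑ w : Fin (n + 1) → E,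
    if (∀ i : Fin (n + 1), (i : ℕ) < n → w i ∉ A) ∧ w (Fin.last n) ∈ B
    then pathP q η w else 0

/-- `q` is a stochastic matrix. -/
def RowStochastic (q : E → E → ℝ) : Prop :=
  (∀ x y, 0 ≤ q x y) ∧ ∀ x, ∑ y, q x y = 1

/-- Irreducibility: any state can be reached from any state with positive probability. -/
def ChainIrreducible (q : E → E → ℝ) : Prop :=
  ∀ x y : E, ∃ (n : ℕ) (w : Fin (n + 1) → E), w (Fin.last n) = y ∧ 0 < pathP q x w

/-- The holding rate `λ(x) = ∑_y R(x,y)` of a continuous-time chain with jump rates `R`. -/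
noncomputable def lam (R : E → E → ℝ) (x : E) : ℝ := ∑ y, R x y

/-- The jump-chain transition probabilities of a continuous-time chain with rates `R`. -/
noncomputable def jmp (R : E → E → ℝ) (x y : E) : ℝ := R x y / lam R x

/-- The capacity `Cap(A,B) = ∑_{a∈A} μ(a) λ(a) P_a[H_B < H⁺_A]` of a continuous-time
chain with jump rates `R` and measure `μ`. -/
noncomputable def capac (R : E → E → ℝ) (μ : E → ℝ) (A B : Finset E) : ℝ :=
  ∑ a ∈ A, μ a * lam R a * firstHitIn (jmp R) a B (A ∪ B)

open Classical in
/-- The jump rates of the trace on `A` of a continuous-time chain with jump rates `R`: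
`R_A(a,b) = λ(a) P_a[H⁺_A = H_b]` for `a ≠ b` in `A`. -/
noncomputable def traceRate (R : E → E → ℝ) (A : Finset E) (a b : E) : ℝ :=
  if a ∈ A ∧ b ∈ A ∧ a ≠ b then lam R a * firstHitIn (jmp R) a {b} A else 0

set_option linter.unusedSectionVars false

variable {q : E → E → ℝ}

lemma pathP_nonneg (hq : ∀ x y, 0 ≤ q x y) (x : E) {n : ℕ} (w : Fin n → E) :
    0 ≤ pathP q x w :=
  Finset.prod_nonneg fun _ _ => hq _ _

lemma pstate_cons_succ (x y : E) {n : ℕ} (v : Fin n → E) (i : Fin n) :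
    pstate x (Fin.cons y v) i.succ = pstate y v i := by
  unfold pstate
  have hs : (i.succ : ℕ) = i.val + 1 := rfl
  rw [if_neg (by omega)]
  have he : (⟨(i.succ : ℕ) - 1, lt_of_le_of_lt (Nat.sub_le _ _) i.succ.isLt⟩ : Fin (n+1))
      = Fin.castSucc i := by apply Fin.ext; simp
  rw [he]
  rcases Nat.eq_zero_or_pos i.val with h | h
  · rw [if_pos h]
    have : Fin.castSucc i = 0 := by apply Fin.ext; simpa using h
    rw [this, Fin.cons_zero]
  · rw [if_neg (by omega)]
    have : Fin.castSucc i = Fin.succ ⟨i.val - 1, by omega⟩ := by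
      apply Fin.ext; simp; omega
    rw [this, Fin.cons_succ]

lemma pathP_cons (x y : E) {n : ℕ} (v : Fin n → E) :
    pathP q x (Fin.cons y v) = q x y * pathP q y v := by
  have h2 : ∀ i : Fin n, q (pstate x (Fin.cons y v) i.succ) ((Fin.cons y v : Fin (n+1) → E) i.succ)
      = q (pstate y v i) (v i) := fun i => by
    rw [pstate_cons_succ]; simp
  have h1 : q (pstate x (Fin.cons y v) 0) ((Fin.cons y v : Fin (n+1) → E) 0) = q x y := by
    simp; rfl
  rw [pathP, pathP, Fin.prod_univ_succ, h1]
  congr 1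
  exact Finset.prod_congr rfl fun i _ => h2 i

lemma sum_pi_succ {n : ℕ} (F : (Fin (n + 1) → E) → ℝ) :
    ∑ w : Fin (n + 1) → E, F w = ∑ y : E, ∑ v : Fin n → E, F (Fin.cons y v) := by
  rw [← Equiv.sum_comp (Fin.consEquiv (fun _ : Fin (n+1) => E)) F, Fintype.sum_prod_type]
  rfl

lemma total_one (hq : RowStochastic q) : ∀ (n : ℕ) (x : E), ∑ w : Fin n → E, pathP q x w = 1 := by
  intro n
  induction n with
  | zero => intro x; simp [pathP]
  | succ n ih =>
    intro x
    rw [sum_pi_succ]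
    simp only [pathP_cons, ← Finset.mul_sum]
    simp only [ih, mul_one]
    exact hq.2 x

open Classical in
noncomputable def hitTerm (q : E → E → ℝ) (x : E) (B A : Finset E) (n : ℕ) : ℝ :=
  ∑ w : Fin (n + 1) → E,
    if (∀ i : Fin (n + 1), (i : ℕ) < n → w i ∉ A) ∧ w (Fin.last n) ∈ B
    then pathP q x w else 0

lemma firstHitIn_eq (q : E → E → ℝ) (x : E) (B A : Finset E) :
    firstHitIn q x B A = ∑' n, hitTerm q x B A n := rfl

open Classical in
noncomputable def usurv (q : E → E → ℝ) (x : E) (A : Finset E) (n : ℕ) : ℝ :=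
  ∑ w : Fin n → E, if (∀ i, w i ∉ A) then pathP q x w else 0

open Classical in
noncomputable def vsurv (q : E → E → ℝ) (x : E) (A : Finset E) (n : ℕ) : ℝ :=
  ∑ w : Fin (n + 1) → E, if (∀ i : Fin (n + 1), (i : ℕ) < n → w i ∉ A) then pathP q x w else 0

variable {A B C : Finset E} {x : E}

lemma hitTerm_nonneg (hq : RowStochastic q) (n : ℕ) : 0 ≤ hitTerm q x B A n := by
  refine Finset.sum_nonneg fun w _ => ?_
  split
  · exact pathP_nonneg hq.1 x w
  · exact le_rfl

lemma usurv_nonneg (hq : RowStochastic q) (n : ℕ) : 0 ≤ usurv q x A n := by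
  refine Finset.sum_nonneg fun w _ => ?_
  split
  · exact pathP_nonneg hq.1 x w
  · exact le_rfl

lemma usurv_zero : usurv q x A 0 = 1 := by
  rw [usurv]
  rw [Finset.sum_eq_single_of_mem (fun i : Fin 0 => x) (Finset.mem_univ _)]
  · rw [if_pos (fun i => i.elim0)]; simp [pathP]
  · intro w _ hw; exact absurd (funext fun i => i.elim0) hw

lemma usurv_succ (n : ℕ) :
    usurv q x A (n + 1) = ∑ y, if y ∉ A then q x y * usurv q y A n else 0 := by
  rw [usurv, sum_pi_succ]
  refine Finset.sum_congr rfl fun y _ => ?_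
  have hcond : ∀ v : Fin n → E,
      ((∀ i : Fin (n+1), (Fin.cons y v : Fin (n+1) → E) i ∉ A) ↔ (y ∉ A ∧ ∀ i : Fin n, v i ∉ A)) := by
    intro v
    rw [Fin.forall_fin_succ]
    simp
  by_cases hy : y ∉ A
  · rw [if_pos hy, usurv, Finset.mul_sum]
    refine Finset.sum_congr rfl fun v _ => ?_
    rw [pathP_cons]
    by_cases hv : ∀ i : Fin n, v i ∉ A
    · rw [if_pos ((hcond v).2 ⟨hy, hv⟩), if_pos hv]
    · rw [if_neg (fun h => hv ((hcond v).1 h).2), if_neg hv, mul_zero]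
  · rw [if_neg hy]
    refine Finset.sum_eq_zero fun v _ => ?_
    rw [if_neg (fun h => hy ((hcond v).1 h).1)]

lemma hitTerm_zero : hitTerm q x B A 0 = ∑ y, if y ∈ B then q x y else 0 := by
  rw [hitTerm, sum_pi_succ]
  refine Finset.sum_congr rfl fun y _ => ?_
  rw [Fintype.sum_unique]
  have hc : ((∀ i : Fin 1, (i:ℕ) < 0 → (Fin.cons y (default : Fin 0 → E) : Fin 1 → E) i ∉ A) ∧
      (Fin.cons y (default : Fin 0 → E) : Fin 1 → E) (Fin.last 0) ∈ B) ↔ y ∈ B := by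
    constructor
    · rintro ⟨-, h⟩; simpa using h
    · intro h; exact ⟨fun i hi => absurd hi (by omega), by simpa using h⟩
  rw [pathP_cons]
  by_cases hy : y ∈ B
  · rw [if_pos (hc.2 hy), if_pos hy]; simp [pathP]
  · rw [if_neg (fun h => hy (hc.1 h)), if_neg hy]

lemma hitTerm_succ (n : ℕ) :
    hitTerm q x B A (n + 1) = ∑ y, if y ∉ A then q x y * hitTerm q y B A n else 0 := by
  rw [hitTerm, sum_pi_succ]
  refine Finset.sum_congr rfl fun y _ => ?_
  have hcond : ∀ v : Fin (n+1) → E,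
      ((∀ i : Fin (n+2), (i:ℕ) < n+1 → (Fin.cons y v : Fin (n+2) → E) i ∉ A) ∧
        (Fin.cons y v : Fin (n+2) → E) (Fin.last (n+1)) ∈ B)
      ↔ (y ∉ A ∧ ((∀ i : Fin (n+1), (i:ℕ) < n → v i ∉ A) ∧ v (Fin.last n) ∈ B)) := by
    intro v
    have hlast : (Fin.cons y v : Fin (n+2) → E) (Fin.last (n+1)) = v (Fin.last n) := by
      rw [← Fin.succ_last, Fin.cons_succ]
    rw [hlast]
    constructor
    · rintro ⟨h1, h2⟩
      refine ⟨?_, ?_, h2⟩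
      · have := h1 0 (by simp)
        simpa using this
      · intro i hi
        have := h1 i.succ (by simpa using Nat.succ_lt_succ hi)
        rwa [Fin.cons_succ] at this
    · rintro ⟨hy, hv, h2⟩
      refine ⟨?_, h2⟩
      intro i hi
      rcases Fin.eq_zero_or_eq_succ i with rfl | ⟨j, rfl⟩
      · simpa using hy
      · rw [Fin.cons_succ]
        exact hv j (by simpa using hi)
  by_cases hy : y ∉ A
  · rw [if_pos hy, hitTerm, Finset.mul_sum]
    refine Finset.sum_congr rfl fun v _ => ?_
    rw [pathP_cons]
    by_cases hv : (∀ i : Fin (n+1), (i:ℕ) < n → v i ∉ A) ∧ v (Fin.last n) ∈ B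
    · rw [if_pos ((hcond v).2 ⟨hy, hv⟩), if_pos hv]
    · rw [if_neg (fun h => hv ((hcond v).1 h).2), if_neg hv, mul_zero]
  · rw [if_neg hy]
    refine Finset.sum_eq_zero fun v _ => ?_
    rw [if_neg (fun h => hy ((hcond v).1 h).1)]

lemma vsurv_zero (hq : RowStochastic q) : vsurv q x A 0 = 1 := by
  rw [vsurv]
  have h : ∀ w : Fin (0+1) → E,
      (if ∀ i : Fin (0+1), (i:ℕ) < 0 → w i ∉ A then pathP q x w else 0) = pathP q x w :=
    fun w => if_pos (fun i hi => absurd hi (by omega))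
  rw [Finset.sum_congr rfl fun w _ => h w]
  exact total_one hq 1 x

lemma vsurv_succ (n : ℕ) :
    vsurv q x A (n + 1) = ∑ y, if y ∉ A then q x y * vsurv q y A n else 0 := by
  rw [vsurv, sum_pi_succ]
  refine Finset.sum_congr rfl fun y _ => ?_
  have hcond : ∀ v : Fin (n+1) → E,
      (∀ i : Fin (n+2), (i:ℕ) < n+1 → (Fin.cons y v : Fin (n+2) → E) i ∉ A)
      ↔ (y ∉ A ∧ (∀ i : Fin (n+1), (i:ℕ) < n → v i ∉ A)) := by
    intro v
    constructor
    · intro h1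
      refine ⟨?_, ?_⟩
      · have := h1 0 (by simp)
        simpa using this
      · intro i hi
        have := h1 i.succ (by simpa using Nat.succ_lt_succ hi)
        rwa [Fin.cons_succ] at this
    · rintro ⟨hy, hv⟩ i hi
      rcases Fin.eq_zero_or_eq_succ i with rfl | ⟨j, rfl⟩
      · simpa using hy
      · rw [Fin.cons_succ]
        exact hv j (by simpa using hi)
  by_cases hy : y ∉ A
  · rw [if_pos hy, vsurv, Finset.mul_sum]
    refine Finset.sum_congr rfl fun v _ => ?_
    rw [pathP_cons]
    by_cases hv : ∀ i : Fin (n+1), (i:ℕ) < n → v i ∉ A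
    · rw [if_pos ((hcond v).2 ⟨hy, hv⟩), if_pos hv]
    · rw [if_neg (fun h => hv ((hcond v).1 h).2), if_neg hv, mul_zero]
  · rw [if_neg hy]
    refine Finset.sum_eq_zero fun v _ => ?_
    rw [if_neg (fun h => hy ((hcond v).1 h).1)]

lemma vsurv_eq_usurv (hq : RowStochastic q) : ∀ (n : ℕ) (x : E), vsurv q x A n = usurv q x A n := by
  intro n
  induction n with
  | zero => intro x; rw [vsurv_zero hq, usurv_zero]
  | succ n ih =>
    intro x
    rw [vsurv_succ, usurv_succ]
    refine Finset.sum_congr rfl fun y _ => ?_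
    rw [ih y]

lemma usurv_cond_iff {n : ℕ} (w : Fin (n+1) → E) :
    (∀ i : Fin (n+1), w i ∉ A) ↔ ((∀ i : Fin (n+1), (i:ℕ) < n → w i ∉ A) ∧ w (Fin.last n) ∉ A) := by
  constructor
  · exact fun h => ⟨fun i _ => h i, h _⟩
  · rintro ⟨h1, h2⟩ i
    rcases Nat.lt_or_ge (i:ℕ) n with hi | hi
    · exact h1 i hi
    · have : i = Fin.last n := Fin.ext (by have := i.isLt; simp [Fin.last]; omega)
      rw [this]; exact h2

lemma vsurv_split (n : ℕ) :
    vsurv q x A n = hitTerm q x A A n + usurv q x A (n+1) := by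
  rw [vsurv, hitTerm, usurv, ← Finset.sum_add_distrib]
  refine Finset.sum_congr rfl fun w _ => ?_
  by_cases hP : (∀ i : Fin (n+1), (i:ℕ) < n → w i ∉ A)
  · by_cases hQ : w (Fin.last n) ∈ A
    · rw [if_pos hP, if_pos ⟨hP, hQ⟩,
        if_neg (fun h => ((usurv_cond_iff w).1 h).2 hQ), add_zero]
    · rw [if_pos hP, if_neg (fun (h : _ ∧ _) => hQ h.2),
        if_pos ((usurv_cond_iff w).2 ⟨hP, hQ⟩), zero_add]
  · rw [if_neg hP, if_neg (fun (h : _ ∧ _) => hP h.1),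
      if_neg (fun h => hP ((usurv_cond_iff w).1 h).1), add_zero]

lemma hitTerm_self (hq : RowStochastic q) (n : ℕ) :
    hitTerm q x A A n = usurv q x A n - usurv q x A (n+1) := by
  have := vsurv_split (q := q) (x := x) (A := A) n
  rw [vsurv_eq_usurv hq] at this
  linarith

lemma hitTerm_mono (hq : RowStochastic q) (hBB : B ⊆ C) (n : ℕ) :
    hitTerm q x B A n ≤ hitTerm q x C A n := by
  refine Finset.sum_le_sum fun w _ => ?_
  by_cases h : (∀ i : Fin (n+1), (i:ℕ) < n → w i ∉ A) ∧ w (Fin.last n) ∈ B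
  · rw [if_pos h, if_pos ⟨h.1, hBB h.2⟩]
  · rw [if_neg h]
    split
    · exact pathP_nonneg hq.1 x w
    · exact le_rfl

lemma sum_range_hitTerm_self (hq : RowStochastic q) (N : ℕ) :
    ∑ n ∈ Finset.range N, hitTerm q x A A n = 1 - usurv q x A N := by
  have : ∑ n ∈ Finset.range N, hitTerm q x A A n
      = ∑ n ∈ Finset.range N, (usurv q x A n - usurv q x A (n+1)) :=
    Finset.sum_congr rfl fun n _ => hitTerm_self hq n
  rw [this, Finset.sum_range_sub' (usurv q x A) N, usurv_zero]

lemma summable_hitTerm (hq : RowStochastic q) (hBA : B ⊆ A) :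
    Summable (hitTerm q x B A) := by
  refine summable_of_sum_range_le (c := 1) (fun n => hitTerm_nonneg hq n) (fun N => ?_)
  calc ∑ n ∈ Finset.range N, hitTerm q x B A n
      ≤ ∑ n ∈ Finset.range N, hitTerm q x A A n :=
        Finset.sum_le_sum fun n _ => hitTerm_mono hq hBA n
    _ = 1 - usurv q x A N := sum_range_hitTerm_self hq N
    _ ≤ 1 := by have := usurv_nonneg (q := q) (x := x) (A := A) hq N; linarith

lemma usurv_le_one (hq : RowStochastic q) : ∀ (n : ℕ) (x : E), usurv q x A n ≤ 1 := by
  intro n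
  induction n with
  | zero => intro x; rw [usurv_zero]
  | succ n ih =>
    intro x
    rw [usurv_succ]
    calc ∑ y, (if y ∉ A then q x y * usurv q y A n else 0) ≤ ∑ y, q x y := by
          refine Finset.sum_le_sum fun y _ => ?_
          split
          · calc q x y * usurv q y A n ≤ q x y * 1 :=
                  mul_le_mul_of_nonneg_left (ih y) (hq.1 x y)
              _ = q x y := mul_one _
          · exact hq.1 x y
      _ = 1 := hq.2 x

lemma usurv_anti (hq : RowStochastic q) : ∀ (n : ℕ) (x : E), usurv q x A (n+1) ≤ usurv q x A n := by
  intro n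
  induction n with
  | zero => intro x; rw [usurv_zero]; exact usurv_le_one hq 1 x
  | succ n ih =>
    intro x
    rw [usurv_succ (n+1), usurv_succ n]
    refine Finset.sum_le_sum fun y _ => ?_
    split
    · exact mul_le_mul_of_nonneg_left (ih y) (hq.1 x y)
    · exact le_rfl

lemma usurv_antitone (hq : RowStochastic q) (x : E) : Antitone (usurv q x A) :=
  antitone_nat_of_succ_le fun n => usurv_anti hq n x

lemma usurv_lt_one (hq : RowStochastic q) (hirr : ChainIrreducible q) (hA : A.Nonempty)
    (y : E) : ∃ m : ℕ, usurv q y A m < 1 := by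
  obtain ⟨a, ha⟩ := hA
  obtain ⟨n, w, hlast, hpos⟩ := hirr y a
  refine ⟨n + 1, ?_⟩
  have hb : usurv q y A (n+1) ≤ 1 - pathP q y w := by
    rw [usurv]
    have hptw : ∀ w' : Fin (n+1) → E,
        (if (∀ i, w' i ∉ A) then pathP q y w' else 0)
          ≤ pathP q y w' - (if w' = w then pathP q y w else 0) := by
      intro w'
      by_cases he : w' = w
      · subst he
        rw [if_neg (fun h => (h (Fin.last n)) (hlast ▸ ha)), if_pos rfl]
        simp
      · rw [if_neg he, sub_zero]
        split
        · exact le_rfl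
        · exact pathP_nonneg hq.1 y w'
    calc (∑ w' : Fin (n+1) → E, if (∀ i, w' i ∉ A) then pathP q y w' else 0)
        ≤ ∑ w' : Fin (n+1) → E, (pathP q y w' - (if w' = w then pathP q y w else 0)) :=
          Finset.sum_le_sum fun w' _ => hptw w'
      _ = 1 - pathP q y w := by
          rw [Finset.sum_sub_distrib, total_one hq, Finset.sum_ite_eq' Finset.univ w]
          rw [if_pos (Finset.mem_univ w)]
  linarith

lemma usurv_tendsto (hq : RowStochastic q) (hirr : ChainIrreducible q) (hA : A.Nonempty)
    (x : E) : Filter.Tendsto (usurv q x A) Filter.atTop (nhds 0) := by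
  have hne : (Finset.univ : Finset E).Nonempty := ⟨x, Finset.mem_univ x⟩
  choose f hf using fun y => usurv_lt_one (A := A) hq hirr hA y
  set n0 : ℕ := Finset.univ.sup f + 1 with hn0
  have hn0pos : 0 < n0 := Nat.succ_pos _
  set ρ : ℝ := Finset.univ.sup' hne (fun y => usurv q y A n0) with hρ
  have hρlt : ρ < 1 := by
    rw [hρ, Finset.sup'_lt_iff]
    intro y _
    calc usurv q y A n0 ≤ usurv q y A (f y) :=
          usurv_antitone hq y (le_trans (Finset.le_sup (Finset.mem_univ y)) (Nat.le_succ _))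
      _ < 1 := hf y
  have hsup : ∀ y : E, usurv q y A n0 ≤ ρ :=
    fun y => Finset.le_sup' (fun y => usurv q y A n0) (Finset.mem_univ y)
  have hρ0 : 0 ≤ ρ := le_trans (usurv_nonneg hq n0) (hsup x)
  have key : ∀ (m : ℕ) (y : E), usurv q y A (m + n0) ≤ usurv q y A m * ρ := by
    intro m
    induction m with
    | zero => intro y; rw [Nat.zero_add, usurv_zero, one_mul]; exact hsup y
    | succ m ih =>
      intro y
      have : m + 1 + n0 = (m + n0) + 1 := by omega
      rw [this, usurv_succ, usurv_succ m, Finset.sum_mul]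
      refine Finset.sum_le_sum fun z _ => ?_
      split
      · rw [mul_assoc]
        exact mul_le_mul_of_nonneg_left (ih z) (hq.1 y z)
      · rw [zero_mul]
  have hiter : ∀ (k : ℕ) (y : E), usurv q y A (k * n0) ≤ ρ ^ k := by
    intro k
    induction k with
    | zero => intro y; rw [Nat.zero_mul, usurv_zero, pow_zero]
    | succ k ih =>
      intro y
      have : (k + 1) * n0 = k * n0 + n0 := by ring
      rw [this, pow_succ]
      exact le_trans (key _ y) (mul_le_mul_of_nonneg_right (ih y) hρ0)
  have hdiv : Filter.Tendsto (fun n : ℕ => n / n0) Filter.atTop Filter.atTop := by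
    refine Filter.tendsto_atTop_atTop.2 fun b => ⟨b * n0, fun n hn => ?_⟩
    exact (Nat.le_div_iff_mul_le hn0pos).2 hn
  have hpow : Filter.Tendsto (fun k : ℕ => ρ ^ k) Filter.atTop (nhds 0) :=
    tendsto_pow_atTop_nhds_zero_of_lt_one hρ0 hρlt
  refine squeeze_zero (fun n => usurv_nonneg hq n) (fun n => ?_) (hpow.comp hdiv)
  calc usurv q x A n ≤ usurv q x A ((n / n0) * n0) :=
        usurv_antitone hq x (Nat.div_mul_le_self n n0)
    _ ≤ ρ ^ (n / n0) := hiter _ x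

lemma firstHitIn_self (hq : RowStochastic q) (hirr : ChainIrreducible q) (hA : A.Nonempty)
    (x : E) : firstHitIn q x A A = 1 := by
  have hsum := (summable_hitTerm (x := x) hq (subset_refl A)).hasSum
  have ht := hsum.tendsto_sum_nat
  have heq : (fun N => ∑ n ∈ Finset.range N, hitTerm q x A A n)
      = fun N => 1 - usurv q x A N := funext fun N => sum_range_hitTerm_self hq N
  rw [heq] at ht
  have ht2 : Filter.Tendsto (fun N => 1 - usurv q x A N) Filter.atTop (nhds 1) := by
    have := Filter.Tendsto.sub (tendsto_const_nhds (x := (1:ℝ)) (f := Filter.atTop))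
      (usurv_tendsto hq hirr hA x)
    simpa using this
  have : ∑' n, hitTerm q x A A n = 1 := tendsto_nhds_unique ht ht2
  rw [firstHitIn_eq, this]

lemma hitTerm_add (hBC : Disjoint B C) (n : ℕ) :
    hitTerm q x (B ∪ C) A n = hitTerm q x B A n + hitTerm q x C A n := by
  rw [hitTerm, hitTerm, hitTerm, ← Finset.sum_add_distrib]
  refine Finset.sum_congr rfl fun w _ => ?_
  by_cases hP : ∀ i : Fin (n+1), (i:ℕ) < n → w i ∉ A
  · by_cases hBw : w (Fin.last n) ∈ B
    · have hCw : w (Fin.last n) ∉ C := fun hc => (Finset.disjoint_left.1 hBC hBw) hc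
      rw [if_pos ⟨hP, Finset.mem_union_left _ hBw⟩, if_pos ⟨hP, hBw⟩,
        if_neg (fun h => hCw h.2), add_zero]
    · by_cases hCw : w (Fin.last n) ∈ C
      · rw [if_pos ⟨hP, Finset.mem_union_right _ hCw⟩, if_neg (fun h => hBw h.2),
          if_pos ⟨hP, hCw⟩, zero_add]
      · rw [if_neg ?_, if_neg (fun h => hBw h.2), if_neg (fun h => hCw h.2), add_zero]
        rintro ⟨-, h⟩
        rcases Finset.mem_union.1 h with h | h
        · exact hBw h
        · exact hCw h
  · rw [if_neg (fun h => hP h.1), if_neg (fun h => hP h.1), if_neg (fun h => hP h.1), add_zero]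

lemma firstHitIn_union (hq : RowStochastic q) (hBC : Disjoint B C) (hBA : B ⊆ A) (hCA : C ⊆ A) :
    firstHitIn q x (B ∪ C) A = firstHitIn q x B A + firstHitIn q x C A := by
  rw [firstHitIn_eq, firstHitIn_eq, firstHitIn_eq,
    ← Summable.tsum_add (summable_hitTerm hq hBA) (summable_hitTerm hq hCA)]
  exact tsum_congr (hitTerm_add hBC)

lemma firstHitIn_step (hq : RowStochastic q) (hBA : B ⊆ A) (x : E) :
    firstHitIn q x B A
      = ∑ y, q x y * (if y ∈ B then 1 else if y ∈ A then 0 else firstHitIn q y B A) := by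
  rw [firstHitIn_eq, Summable.tsum_eq_zero_add (summable_hitTerm hq hBA)]
  have hs : ∑' n, hitTerm q x B A (n+1)
      = ∑ y, if y ∉ A then q x y * firstHitIn q y B A else 0 := by
    rw [tsum_congr (fun n => hitTerm_succ (x := x) (B := B) (A := A) n)]
    rw [Summable.tsum_finsetSum (fun y _ => ?_)]
    · refine Finset.sum_congr rfl fun y _ => ?_
      by_cases hy : y ∉ A
      · simp only [if_pos hy]
        rw [tsum_mul_left, firstHitIn_eq]
      · simp only [if_neg hy, tsum_zero]
    · by_cases hy : y ∉ A
      · simp only [if_pos hy]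
        exact (summable_hitTerm hq hBA).mul_left _
      · simp only [if_neg hy]
        exact summable_zero
  rw [hitTerm_zero, hs, ← Finset.sum_add_distrib]
  refine Finset.sum_congr rfl fun y _ => ?_
  by_cases hyB : y ∈ B
  · rw [if_pos hyB, if_pos hyB, if_neg (fun h => h (hBA hyB)), add_zero, mul_one]
  · rw [if_neg hyB, if_neg hyB, zero_add]
    by_cases hyA : y ∈ A
    · rw [if_neg (fun h => h hyA), if_pos hyA, mul_zero]
    · rw [if_pos hyA, if_neg hyA]

lemma max_principle (hq : RowStochastic q) (hirr : ChainIrreducible q)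
    {D : Finset E} (hD : D.Nonempty) {d : E → ℝ}
    (h0 : ∀ x ∈ D, d x = 0) (hh : ∀ x ∉ D, d x = ∑ y, q x y * d y) :
    ∀ x, d x ≤ 0 := by
  by_contra hcon
  push_neg at hcon
  obtain ⟨x0, hx0⟩ := hcon
  have hne : (Finset.univ : Finset E).Nonempty := ⟨x0, Finset.mem_univ _⟩
  set M := Finset.univ.sup' hne d with hM
  have hMle : ∀ y, d y ≤ M := fun y => Finset.le_sup' d (Finset.mem_univ y)
  have hMpos : 0 < M := lt_of_lt_of_le hx0 (hMle x0)
  obtain ⟨z, -, hz⟩ := Finset.exists_mem_eq_sup' hne d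
  have hstep : ∀ x, d x = M → ∀ y, 0 < q x y → d y = M := by
    intro x hx y hqy
    have hxD : x ∉ D := fun hin => by rw [h0 x hin] at hx; linarith
    have hsum : ∑ y', q x y' * (M - d y') = 0 := by
      have h1 : ∑ y', q x y' * M = M := by rw [← Finset.sum_mul, hq.2, one_mul]
      have h2 : ∑ y', q x y' * d y' = M := by rw [← hh x hxD, hx]
      simp only [mul_sub]
      rw [Finset.sum_sub_distrib, h1, h2, sub_self]
    have hterm : q x y * (M - d y) = 0 :=
      (Finset.sum_eq_zero_iff_of_nonneg (fun y' _ =>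
        mul_nonneg (hq.1 x y') (by linarith [hMle y']))).1 hsum y (Finset.mem_univ y)
    rcases mul_eq_zero.1 hterm with h | h
    · exact absurd h (ne_of_gt hqy)
    · linarith
  obtain ⟨b, hb⟩ := hD
  obtain ⟨n, w, hlast, hpos⟩ := hirr z b
  have hfac : ∀ i : Fin (n+1), 0 < q (pstate z w i) (w i) := by
    intro i
    have hne0 : q (pstate z w i) (w i) ≠ 0 := by
      intro h
      rw [pathP, Finset.prod_eq_zero (Finset.mem_univ i) h] at hpos
      exact lt_irrefl 0 hpos
    exact lt_of_le_of_ne (hq.1 _ _) (Ne.symm hne0)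
  have hall : ∀ k : ℕ, ∀ hk : k < n + 1, d (w ⟨k, hk⟩) = M := by
    intro k
    induction k with
    | zero =>
      intro hk
      have hp : pstate z w ⟨0, hk⟩ = z := by simp [pstate]
      refine hstep z hz.symm (w ⟨0, hk⟩) ?_
      rw [← hp]; exact hfac ⟨0, hk⟩
    | succ k ih =>
      intro hk
      have hk' : k < n + 1 := by omega
      have hp : pstate z w ⟨k+1, hk⟩ = w ⟨k, hk'⟩ := by simp [pstate]
      refine hstep (w ⟨k, hk'⟩) (ih hk') (w ⟨k+1, hk⟩) ?_
      rw [← hp]; exact hfac ⟨k+1, hk⟩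
  have hbM : d b = M := by
    have h := hall n n.lt_succ_self
    rwa [show (⟨n, n.lt_succ_self⟩ : Fin (n+1)) = Fin.last n from rfl, hlast] at h
  rw [h0 b hb] at hbM
  linarith

lemma firstHitIn_empty (x : E) : firstHitIn q x ∅ A = 0 := by
  rw [firstHitIn_eq]
  have h : ∀ n, hitTerm q x (∅ : Finset E) A n = 0 := by
    intro n
    refine Finset.sum_eq_zero fun w _ => ?_
    exact if_neg (fun h => absurd h.2 (Finset.notMem_empty _))
  rw [tsum_congr h, tsum_zero]


end ChainBasics

/-- for an irreducible finite-state Markov chain, a state `η` and two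
disjoint sets `B`, `C` not containing `η`:
`P_η[H_B < H_C] = α/(1+α)` with `α = P_η[H_B < H⁺_{C∪{η}}] / P_η[H_C < H⁺_{B∪{η}}]`,
provided both probabilities are positive.  Hitting probabilities (depending only on the
jump chain `q`) are expressed through `firstHitIn`; note
`{H_B < H⁺_{C∪{η}}}` is the event that the first visit to `B ∪ C ∪ {η}` occurs in `B`. -/
theorem hitting_prob_alpha {E : Type*} [Fintype E] [DecidableEq E]
    (q : E → E → ℝ) (hq : RowStochastic q) (hirr : ChainIrreducible q)
    (B C : Finset E) (η : E) (hBC : Disjoint B C) (hηB : η ∉ B) (hηC : η ∉ C)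
    (hB : 0 < firstHitIn q η B (insert η (B ∪ C)))
    (hC : 0 < firstHitIn q η C (insert η (B ∪ C))) :
    firstHitIn q η B (B ∪ C) =
      (firstHitIn q η B (insert η (B ∪ C)) / firstHitIn q η C (insert η (B ∪ C))) /
        (1 + firstHitIn q η B (insert η (B ∪ C)) / firstHitIn q η C (insert η (B ∪ C))) := by
  set D : Finset E := B ∪ C with hD
  set A : Finset E := insert η (B ∪ C) with hA
  set pB : ℝ := firstHitIn q η B A with hpB
  set pC : ℝ := firstHitIn q η C A with hpC
  set pη : ℝ := firstHitIn q η {η} A with hpη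
  have hηD : η ∉ D := by
    rw [hD]; simp [hηB, hηC]
  have hBA : B ⊆ A := subset_trans Finset.subset_union_left (Finset.subset_insert _ _)
  have hCA : C ⊆ A := subset_trans Finset.subset_union_right (Finset.subset_insert _ _)
  have hηmemA : η ∈ A := Finset.mem_insert_self _ _
  have hsA : ({η} : Finset E) ⊆ A := Finset.singleton_subset_iff.2 hηmemA
  have hBD : B ⊆ D := Finset.subset_union_left
  have hAeq : A = {η} ∪ D := by rw [hA, hD, Finset.insert_eq]
  have hdisj1 : Disjoint ({η} : Finset E) D := by
    rw [Finset.disjoint_left]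
    intro a ha
    rw [Finset.mem_singleton] at ha
    subst ha; exact hηD
  -- total mass one
  have hDA : D ⊆ A := by rw [hAeq]; exact Finset.subset_union_right
  have hone : pη + (pB + pC) = 1 := by
    have h1 : firstHitIn q η ({η} ∪ D) A = 1 := by
      rw [← hAeq]
      exact firstHitIn_self hq hirr ⟨η, hηmemA⟩ η
    rw [firstHitIn_union hq hdisj1 hsA hDA, firstHitIn_union hq hBC hBA hCA] at h1
    exact h1
  have hpBpC : 0 < pB + pC := by positivity
  set c : ℝ := pB / (pB + pC) with hc
  have hcmul : c * (pB + pC) = pB := div_mul_cancel₀ _ (ne_of_gt hpBpC)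
  have ceq : pB + c * pη = c := by
    have h2 : pη = 1 - pB - pC := by linarith
    linear_combination c * h2 - hcmul
  -- nonemptiness
  have hBne : B.Nonempty := by
    rcases B.eq_empty_or_nonempty with h | h
    · have h0 : pB = 0 := by rw [hpB, h, firstHitIn_empty]
      rw [h0] at hB
      exact absurd hB (lt_irrefl 0)
    · exact h
  have hDne : D.Nonempty := by
    obtain ⟨b, hb⟩ := hBne
    exact ⟨b, Finset.mem_union_left _ hb⟩
  -- the two harmonic functions
  set F : E → ℝ := fun y => if y ∈ B then 1 else if y ∈ C then 0 else firstHitIn q y B D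
    with hF
  set H : E → ℝ := fun y => if y ∈ B then 1 else if y ∈ C then 0 else if y = η then c
    else firstHitIn q y B A + c * firstHitIn q y {η} A with hH
  have hFD : ∀ x ∈ D, F x = if x ∈ B then 1 else 0 := by
    intro x hx
    simp only [hF]
    by_cases hxB : x ∈ B
    · rw [if_pos hxB, if_pos hxB]
    · have hxC : x ∈ C := by
        rcases Finset.mem_union.1 hx with h | h
        · exact absurd h hxB
        · exact h
      rw [if_neg hxB, if_pos hxC, if_neg hxB]
  have hHD : ∀ x ∈ D, H x = if x ∈ B then 1 else 0 := by
    intro x hx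
    simp only [hH]
    by_cases hxB : x ∈ B
    · rw [if_pos hxB, if_pos hxB]
    · have hxC : x ∈ C := by
        rcases Finset.mem_union.1 hx with h | h
        · exact absurd h hxB
        · exact h
      rw [if_neg hxB, if_pos hxC, if_neg hxB]
  have hFharm : ∀ x, x ∉ D → F x = ∑ y, q x y * F y := by
    intro x hx
    have hxB : x ∉ B := fun h => hx (Finset.mem_union_left _ h)
    have hxC : x ∉ C := fun h => hx (Finset.mem_union_right _ h)
    have h1 : F x = firstHitIn q x B D := by simp only [hF]; rw [if_neg hxB, if_neg hxC]
    rw [h1, firstHitIn_step hq hBD x]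
    refine Finset.sum_congr rfl fun y _ => ?_
    congr 1
    by_cases hyB : y ∈ B <;> by_cases hyC : y ∈ C <;> simp [hF, hD, hyB, hyC]
  have hkey : ∀ x : E, firstHitIn q x B A + c * firstHitIn q x {η} A = ∑ y, q x y * H y := by
    intro x
    rw [firstHitIn_step hq hBA x, firstHitIn_step hq hsA x, Finset.mul_sum,
      ← Finset.sum_add_distrib]
    refine Finset.sum_congr rfl fun y _ => ?_
    rw [show c * (q x y * (if y ∈ ({η} : Finset E) then 1 else if y ∈ A then 0
          else firstHitIn q y {η} A))
        = q x y * (c * (if y ∈ ({η} : Finset E) then 1 else if y ∈ A then 0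
          else firstHitIn q y {η} A)) from by ring]
    rw [← mul_add]
    congr 1
    by_cases hyB : y ∈ B
    · have hyη : y ≠ η := fun h => hηB (h ▸ hyB)
      simp [hH, hyB, hyη, hBA hyB]
    · by_cases hyC : y ∈ C
      · have hyη : y ≠ η := fun h => hηC (h ▸ hyC)
        simp [hH, hyB, hyC, hyη, hCA hyC]
      · by_cases hyη : y = η
        · subst hyη
          simp [hH, hyB, hyC, hηmemA]
        · have hyA : y ∉ A := by
            rw [hA]
            simp [hyB, hyC, hyη]
          simp [hH, hyB, hyC, hyη, hyA]
  have hHharm : ∀ x, x ∉ D → H x = ∑ y, q x y * H y := by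
    intro x hx
    have hxB : x ∉ B := fun h => hx (Finset.mem_union_left _ h)
    have hxC : x ∉ C := fun h => hx (Finset.mem_union_right _ h)
    rw [← hkey x]
    by_cases hxη : x = η
    · subst hxη
      have h1 : H x = c := by simp [hH, hxB, hxC]
      rw [h1, ← hpB, ← hpη]
      exact ceq.symm
    · simp [hH, hxB, hxC, hxη]
  have hFH : ∀ x, F x = H x := by
    have hle : ∀ x, F x - H x ≤ 0 := by
      refine max_principle hq hirr hDne (fun x hx => ?_) (fun x hx => ?_)
      · rw [hFD x hx, hHD x hx, sub_self]
      · rw [hFharm x hx, hHharm x hx, ← Finset.sum_sub_distrib]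
        refine Finset.sum_congr rfl fun y _ => ?_
        ring
    have hge : ∀ x, H x - F x ≤ 0 := by
      refine max_principle hq hirr hDne (fun x hx => ?_) (fun x hx => ?_)
      · rw [hFD x hx, hHD x hx, sub_self]
      · rw [hHharm x hx, hFharm x hx, ← Finset.sum_sub_distrib]
        refine Finset.sum_congr rfl fun y _ => ?_
        ring
    intro x
    have h1 := hle x
    have h2 := hge x
    linarith
  have hfinal : firstHitIn q η B D = c := by
    have h1 := hFH η
    have h2 : F η = firstHitIn q η B D := by simp [hF, hηB, hηC]
    have h3 : H η = c := by simp [hH, hηB, hηC]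
    rw [h2, h3] at h1
    exact h1
  have hgoal2 : insert η D = A := by rw [hA, hD]
  rw [hfinal, hc]
  have hC0 : pC ≠ 0 := ne_of_gt hC
  have hsum0 : pB + pC ≠ 0 := ne_of_gt hpBpC
  have hden : 1 + pB / pC ≠ 0 := by positivity
  field_simp
  ring
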